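/- Let ε ∈ (0,1). Then the bracketing number of the family C_2 of anchored boxes in [0,1]^2 satisfies N_[](ε, C_2, ‖·‖_{L¹}) ≤ 2·(1/ε + 1/2)·(1/ε); more precisely, there exists an ε-bracketing cover of C_2 consisting of pairs of anchored boxes whose cardinality is at most 2(1/ε + 1/2)(1/ε). -/

import Mathlib

open Finset

/-- `B` is an `ε`-bracketing cover of the family `C_d` of anchored boxes in `[0,1]^d`:
a finite set of pairs `(a, b)` of points of `[0,1]^d` with `a ≤ b` componentwise and
`∏ b_j - ∏ a_j ≤ ε` (i.e. the bracket `[1_{[0,a)}, 1_{[0,b)}]` has `L¹`-weight at most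
`ε`), such that every anchored box `[0,x)` with `x ∈ [0,1]^d` satisfies
`a ≤ x ≤ b` componentwise for some `(a, b) ∈ B`. -/
def IsBracketingCoverC (d : ℕ) (ε : ℝ)
    (B : Finset ((Fin d → ℝ) × (Fin d → ℝ))) : Prop :=
  (∀ p ∈ B, p.1 ∈ Set.Icc (0 : Fin d → ℝ) 1 ∧ p.2 ∈ Set.Icc (0 : Fin d → ℝ) 1 ∧
    p.1 ≤ p.2 ∧ (∏ j, p.2 j) - ∏ j, p.1 j ≤ ε) ∧
  ∀ x ∈ Set.Icc (0 : Fin d → ℝ) 1, ∃ p ∈ B, p.1 ≤ x ∧ x ≤ p.2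

/-- The bracketing number `N_[](ε, C_d, ‖·‖_{L¹})` of the family of anchored boxes:
the minimal cardinality of an `ε`-bracketing cover of `C_d`. -/
noncomputable def bracketingNumberC (d : ℕ) (ε : ℝ) : ℕ :=
  sInf { n : ℕ | ∃ B : Finset ((Fin d → ℝ) × (Fin d → ℝ)),
    IsBracketingCoverC d ε B ∧ B.card = n }


namespace Brack

/-- grid point `j` of shell `k` -/
noncomputable def tg (P : ℕ → ℝ) (n : ℕ → ℕ) (k j : ℕ) : ℝ :=
  P k + j * ((1 - P k) / (n k : ℝ))

noncomputable def vcell (P : ℕ → ℝ) (n : ℕ → ℕ) (k j : ℕ) :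
    (Fin 2 → ℝ) × (Fin 2 → ℝ) :=
  (![P k, tg P n k j], ![P (k+1), tg P n k (j+1)])

noncomputable def hcell (P : ℕ → ℝ) (n : ℕ → ℕ) (k j : ℕ) :
    (Fin 2 → ℝ) × (Fin 2 → ℝ) :=
  (![tg P n k j, P k], ![tg P n k (j+1), P (k+1)])

noncomputable def shellsB (K : ℕ) (P : ℕ → ℝ) (n : ℕ → ℕ) :
    Finset ((Fin 2 → ℝ) × (Fin 2 → ℝ)) :=
  insert (![P K, P K], ![1,1])
    ((((Finset.range K).sigma fun k => Finset.range (n k)).image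
        (fun q => vcell P n q.1 q.2)) ∪
     (((Finset.range K).sigma fun k => Finset.range (n k)).image
        (fun q => hcell P n q.1 q.2)))

theorem exists_step (P : ℕ → ℝ) (m : ℝ) :
    ∀ K : ℕ, P 0 ≤ m → m < P K → ∃ k < K, P k ≤ m ∧ m < P (k+1) := by
  intro K
  induction K with
  | zero => intro h0 hK; exact absurd (h0.trans_lt hK) (lt_irrefl _)
  | succ K ih =>
      intro h0 hK
      by_cases h : m < P K
      · obtain ⟨k, hk, h1, h2⟩ := ih h0 h
        exact ⟨k, Nat.lt_succ_of_lt hk, h1, h2⟩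
      · exact ⟨K, Nat.lt_succ_self K, not_lt.1 h, hK⟩

theorem Pmono (P : ℕ → ℝ) (K : ℕ) (hmono : ∀ k < K, P k ≤ P (k+1)) :
    ∀ i j, i ≤ j → j ≤ K → P i ≤ P j := by
  intro i j hij hjK
  induction j with
  | zero => simp [Nat.le_zero.1 hij]
  | succ j ih =>
      rcases Nat.lt_succ_iff_lt_or_eq.1 (Nat.lt_succ_of_le hij) with h | h
      · exact (ih (Nat.lt_succ_iff.1 h) (le_trans (Nat.le_succ j) hjK)).trans
          (hmono j (Nat.lt_of_lt_of_le (Nat.lt_succ_self j) hjK))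
      · exact le_of_eq (congrArg P h)

theorem shells_spec (ε : ℝ) (K : ℕ) (P : ℕ → ℝ) (n : ℕ → ℕ)
    (h0 : P 0 = 0)
    (hmono : ∀ k < K, P k ≤ P (k+1))
    (hlast : P K ≤ 1)
    (hterm : 1 - P K * P K ≤ ε)
    (hn : ∀ k < K, 1 ≤ n k)
    (hshell : ∀ k < K, (P (k+1) - P k) + P k * (1 - P k) / (n k : ℝ) ≤ ε) :
    IsBracketingCoverC 2 ε (shellsB K P n) ∧
    (shellsB K P n).card ≤ 1 + 2 * ∑ k ∈ Finset.range K, n k := by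
  have hPle : ∀ k, k ≤ K → P k ≤ 1 := fun k hk =>
    (Pmono P K hmono k K hk le_rfl).trans hlast
  have hP0 : ∀ k, k ≤ K → 0 ≤ P k := fun k hk => by
    have := Pmono P K hmono 0 k (Nat.zero_le k) hk; linarith [this, h0.ge, h0.le]
  -- basic facts about the grid
  have tg0 : ∀ k, tg P n k 0 = P k := by intro k; simp [tg]
  have tgtop : ∀ k, k < K → tg P n k (n k) = 1 := by
    intro k hk
    have hnk : (n k : ℝ) ≠ 0 := by
      have := hn k hk; positivity
    simp only [tg]
    field_simp
    ring
  have tgmono : ∀ k, k ≤ K → ∀ j, tg P n k j ≤ tg P n k (j+1) := by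
    intro k hk j
    have h1 : (0:ℝ) ≤ (1 - P k) / (n k : ℝ) := by
      apply div_nonneg (by linarith [hPle k hk]) (by positivity)
    simp only [tg]
    push_cast
    nlinarith
  have tgle1 : ∀ k, k < K → ∀ j, j ≤ n k → tg P n k j ≤ 1 := by
    intro k hk j hj
    have hnk : (0:ℝ) < (n k : ℝ) := by
      have := hn k hk; positivity
    have h1 : (j:ℝ) ≤ (n k : ℝ) := by exact_mod_cast hj
    have h2 : (0:ℝ) ≤ 1 - P k := by linarith [hPle k hk.le]
    have : (j:ℝ) * ((1 - P k) / (n k : ℝ)) ≤ (n k : ℝ) * ((1 - P k) / (n k : ℝ)) := by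
      apply mul_le_mul_of_nonneg_right h1 (div_nonneg h2 hnk.le)
    simp only [tg]
    have heq : (n k : ℝ) * ((1 - P k) / (n k : ℝ)) = 1 - P k := by
      field_simp
    nlinarith
  have tgnonneg : ∀ k, k ≤ K → ∀ j, 0 ≤ tg P n k j := by
    intro k hk j
    have h1 : (0:ℝ) ≤ (1 - P k) / (n k : ℝ) := by
      apply div_nonneg (by linarith [hPle k hk]) (by positivity)
    have := hP0 k hk
    simp only [tg]; positivity
  constructor
  · constructor
    · -- validity of each bracket
      intro p hp
      simp only [shellsB, Finset.mem_insert, Finset.mem_union, Finset.mem_image,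
        Finset.mem_sigma, Finset.mem_range] at hp
      have hcorner : ∀ _ : p = (![P K, P K], ![1,1]),
          p.1 ∈ Set.Icc (0 : Fin 2 → ℝ) 1 ∧ p.2 ∈ Set.Icc (0 : Fin 2 → ℝ) 1 ∧
          p.1 ≤ p.2 ∧ (∏ j, p.2 j) - ∏ j, p.1 j ≤ ε := by
        intro hpe
        subst hpe
        refine ⟨⟨?_, ?_⟩, ⟨?_, ?_⟩, ?_, ?_⟩ <;>
          simp [Pi.le_def, Fin.forall_fin_two, Fin.prod_univ_two,
            hP0 K le_rfl, hPle K le_rfl, hterm]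
      rcases hp with hpe | ⟨⟨k, j⟩, ⟨hk, hj⟩, hpe⟩ | ⟨⟨k, j⟩, ⟨hk, hj⟩, hpe⟩
      · exact hcorner hpe
      all_goals {
        subst hpe
        have hkK : k ≤ K := hk.le
        have hk1K : k + 1 ≤ K := hk
        have hA := hP0 k hkK
        have hB := hPle k hkK
        have hC := hP0 (k+1) hk1K
        have hD := hPle (k+1) hk1K
        have hE := tgnonneg k hkK j
        have hF := tgnonneg k hkK (j+1)
        have hG := tgle1 k hk j (le_of_lt hj)
        have hH := tgle1 k hk (j+1) hj
        have hI := tgmono k hkK j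
        have hJ := hmono k hk
        have hW : P (k+1) * tg P n k (j+1) - P k * tg P n k j ≤ ε := by
          have hdelta : tg P n k (j+1) - tg P n k j = (1 - P k) / (n k : ℝ) := by
            simp only [tg]; push_cast; ring
          have h1 : (P (k+1) - P k) * tg P n k (j+1) ≤ (P (k+1) - P k) * 1 := by
            apply mul_le_mul_of_nonneg_left hH (by linarith)
          have h2 : P k * (tg P n k (j+1) - tg P n k j) = P k * (1 - P k) / (n k : ℝ) := by
            rw [hdelta]; ring
          have h3 := hshell k hk
          nlinarith
        refine ⟨⟨?_, ?_⟩, ⟨?_, ?_⟩, ?_, ?_⟩ <;>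
          simp only [vcell, hcell, Pi.le_def, Fin.forall_fin_two, Fin.prod_univ_two,
            Set.mem_Icc, Matrix.cons_val_zero, Matrix.cons_val_one, Matrix.head_cons,
            Pi.zero_apply, Pi.one_apply] <;>
          first
            | (constructor <;> first | assumption | linarith)
            | linarith
      }
    · -- coverage
      intro x hx
      simp only [Set.mem_Icc, Pi.le_def] at hx
      obtain ⟨hx0, hx1⟩ := hx
      have hx00 := hx0 0
      have hx01 := hx0 1
      have hx10 := hx1 0
      have hx11 := hx1 1
      simp only [Pi.zero_apply, Pi.one_apply] at hx00 hx01 hx10 hx11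
      by_cases hcor : P K ≤ x 0 ∧ P K ≤ x 1
      · refine ⟨(![P K, P K], ![1,1]), ?_, ?_, ?_⟩
        · simp [shellsB]
        · simp [Pi.le_def, Fin.forall_fin_two, hcor.1, hcor.2]
        · simp [Pi.le_def, Fin.forall_fin_two, hx10, hx11]
      · -- some coordinate is below P K
        rw [not_and_or, not_le, not_le] at hcor
        -- helper to find the cell in shell k for a value y in [P k, 1]
        have findj : ∀ k, k < K → ∀ y : ℝ, P k ≤ y → y ≤ 1 →
            ∃ j < n k, tg P n k j ≤ y ∧ y ≤ tg P n k (j+1) := by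
          intro k hk y hy1 hy2
          have hnk1 := hn k hk
          have hnkR : (0:ℝ) < (n k : ℝ) := by positivity
          by_cases hP1 : P k = 1
          · -- degenerate: y = 1
            refine ⟨n k - 1, Nat.sub_lt (by omega) one_pos, ?_, ?_⟩
            · have := tgle1 k hk (n k - 1) (Nat.sub_le _ _)
              have hy : y = 1 := le_antisymm hy2 (by rw [← hP1]; exact hy1)
              rw [hy]; exact this
            · have hsucc : n k - 1 + 1 = n k := by omega
              rw [hsucc, tgtop k hk]; exact hy2
          · have hPlt : P k < 1 := lt_of_le_of_ne (hPle k hk.le) hP1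
            set δ := (1 - P k) / (n k : ℝ) with hδ
            have hδpos : 0 < δ := div_pos (by linarith) hnkR
            set j0 := ⌊(y - P k) / δ⌋₊ with hj0
            refine ⟨min j0 (n k - 1), by omega, ?_, ?_⟩
            · -- lower bound
              have h1 : ((min j0 (n k - 1) : ℕ) : ℝ) ≤ (j0 : ℝ) := by
                exact_mod_cast Nat.min_le_left _ _
              have h2 : (j0 : ℝ) ≤ (y - P k) / δ := Nat.floor_le (div_nonneg (by linarith) hδpos.le)
              have h3 : ((min j0 (n k - 1) : ℕ) : ℝ) * δ ≤ ((y - P k)/δ) * δ := by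
                apply mul_le_mul_of_nonneg_right (h1.trans h2) hδpos.le
              have h4 : ((y - P k)/δ) * δ = y - P k := by field_simp
              simp only [tg, ← hδ]
              nlinarith
            · -- upper bound
              rcases le_or_gt j0 (n k - 1) with hle | hlt
              · have hmin : min j0 (n k - 1) = j0 := min_eq_left hle
                rw [hmin]
                have h2 : (y - P k) / δ < (j0 : ℝ) + 1 := Nat.lt_floor_add_one _
                have h3 : (y - P k) / δ * δ < ((j0:ℝ) + 1) * δ := by
                  apply mul_lt_mul_of_pos_right h2 hδpos
                have h4 : ((y - P k)/δ) * δ = y - P k := by field_simp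
                simp only [tg, ← hδ]
                push_cast
                nlinarith
              · have hmin : min j0 (n k - 1) = n k - 1 := min_eq_right (by omega)
                rw [hmin]
                have hsucc : n k - 1 + 1 = n k := by omega
                rw [hsucc, tgtop k hk]
                exact hy2
        rcases le_total (x 0) (x 1) with hxle | hxle
        · -- min is x 0 : vertical cell
          have hm : x 0 < P K := by
            rcases hcor with h | h
            · exact h
            · exact lt_of_le_of_lt hxle h
          obtain ⟨k, hk, hk1, hk2⟩ := exists_step P (x 0) K (by rw [h0]; exact hx00) hm
          obtain ⟨j, hj, hj1, hj2⟩ := findj k hk (x 1) (hk1.trans hxle) hx11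
          refine ⟨vcell P n k j, ?_, ?_, ?_⟩
          · simp only [shellsB, Finset.mem_insert, Finset.mem_union, Finset.mem_image,
              Finset.mem_sigma, Finset.mem_range]
            exact Or.inr (Or.inl ⟨⟨k, j⟩, ⟨hk, hj⟩, rfl⟩)
          · simp only [vcell, Pi.le_def, Fin.forall_fin_two, Matrix.cons_val_zero,
              Matrix.cons_val_one, Matrix.head_cons]
            exact ⟨hk1, hj1⟩
          · simp only [vcell, Pi.le_def, Fin.forall_fin_two, Matrix.cons_val_zero,
              Matrix.cons_val_one, Matrix.head_cons]
            exact ⟨hk2.le, hj2⟩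
        · -- min is x 1 : horizontal cell
          have hm : x 1 < P K := by
            rcases hcor with h | h
            · exact lt_of_le_of_lt hxle h
            · exact h
          obtain ⟨k, hk, hk1, hk2⟩ := exists_step P (x 1) K (by rw [h0]; exact hx01) hm
          obtain ⟨j, hj, hj1, hj2⟩ := findj k hk (x 0) (hk1.trans hxle) hx10
          refine ⟨hcell P n k j, ?_, ?_, ?_⟩
          · simp only [shellsB, Finset.mem_insert, Finset.mem_union, Finset.mem_image,
              Finset.mem_sigma, Finset.mem_range]
            exact Or.inr (Or.inr ⟨⟨k, j⟩, ⟨hk, hj⟩, rfl⟩)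
          · simp only [hcell, Pi.le_def, Fin.forall_fin_two, Matrix.cons_val_zero,
              Matrix.cons_val_one, Matrix.head_cons]
            exact ⟨hj1, hk1⟩
          · simp only [hcell, Pi.le_def, Fin.forall_fin_two, Matrix.cons_val_zero,
              Matrix.cons_val_one, Matrix.head_cons]
            exact ⟨hj2, hk2.le⟩
  · -- cardinality
    have h1 : (shellsB K P n).card ≤ 1 +
        ((((Finset.range K).sigma fun k => Finset.range (n k)).image
            (fun q : (_ : ℕ) × ℕ => vcell P n q.1 q.2)) ∪
         (((Finset.range K).sigma fun k => Finset.range (n k)).image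
            (fun q : (_ : ℕ) × ℕ => hcell P n q.1 q.2))).card := by
      rw [shellsB]
      have := Finset.card_insert_le (α := (Fin 2 → ℝ) × (Fin 2 → ℝ))
        (![P K, P K], ![1,1])
        ((((Finset.range K).sigma fun k => Finset.range (n k)).image
            (fun q : (_ : ℕ) × ℕ => vcell P n q.1 q.2)) ∪
         (((Finset.range K).sigma fun k => Finset.range (n k)).image
            (fun q : (_ : ℕ) × ℕ => hcell P n q.1 q.2)))
      omega
    have h2 := Finset.card_union_le
      ((((Finset.range K).sigma fun k => Finset.range (n k)).image
          (fun q : (_ : ℕ) × ℕ => vcell P n q.1 q.2)))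
      ((((Finset.range K).sigma fun k => Finset.range (n k)).image
          (fun q : (_ : ℕ) × ℕ => hcell P n q.1 q.2)))
    have h3 := Finset.card_image_le (s := (Finset.range K).sigma fun k => Finset.range (n k))
      (f := fun q : (_ : ℕ) × ℕ => vcell P n q.1 q.2)
    have h4 := Finset.card_image_le (s := (Finset.range K).sigma fun k => Finset.range (n k))
      (f := fun q : (_ : ℕ) × ℕ => hcell P n q.1 q.2)
    have h5 : ((Finset.range K).sigma fun k => Finset.range (n k)).card =
        ∑ k ∈ Finset.range K, n k := by
      rw [Finset.card_sigma]; simp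
    omega


theorem sum_aux (e : ℝ) : ∀ K : ℕ,
    ∑ k ∈ Finset.range K, ((1 - (k:ℝ)*e)*((k:ℝ)+1) + 1)
      = (K:ℝ)*(K+1)/2 + K - e*(((K:ℝ)-1)*K*(K+1)/3) := by
  intro K
  induction K with
  | zero => simp
  | succ K ih =>
      rw [Finset.sum_range_succ, ih]
      push_cast
      ring

theorem keyA (θ c : ℝ) (h16 : 16 ≤ θ) (h1 : θ - 1 ≤ c) (h2 : c ≤ θ) :
    1 + (c*(c+1) + 2*c - (2/θ)*((c-1)*c*(c+1)/3)) ≤ θ^2/2 + θ/2 := by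
  have hθ : (0:ℝ) < θ := by linarith
  have hc : (0:ℝ) ≤ c := by linarith
  have e0 : 0 ≤ (θ - c) * (θ + 2*c) := mul_nonneg (by linarith) (by linarith)
  have e1 : 0 ≤ (θ - c) * ((θ+c+3)*(3*θ) - 2*(θ^2+θ*c+c^2-1)) :=
    mul_nonneg (by linarith) (by nlinarith)
  have e2 : θ^2 - 15*θ - 10 ≥ 0 := by nlinarith
  rw [← sub_nonneg]
  have expand : θ^2/2 + θ/2 - (1 + (c*(c+1) + 2*c - (2/θ)*((c-1)*c*(c+1)/3)))
      = ((3*θ)*(θ^2/2 + θ/2 - 1 - c*(c+1) - 2*c) + 2*((c-1)*c*(c+1))) / (3*θ) := by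
    field_simp
    ring
  have goal2 : 0 ≤ (3*θ)*(θ^2/2 + θ/2 - 1 - c*(c+1) - 2*c) + 2*((c-1)*c*(c+1)) := by
    nlinarith
  rw [expand]
  exact div_nonneg goal2 (by linarith)

noncomputable def PA (ε : ℝ) : ℕ → ℝ := fun k => (k:ℝ) * (ε/2)
noncomputable def nA (ε : ℝ) : ℕ → ℕ := fun k => ⌈(1 - PA ε k) * ((k:ℝ)+1)⌉₊

set_option maxHeartbeats 2000000 in
theorem instA (ε : ℝ) (hε : 0 < ε) (h8 : ε ≤ 1/8) :
    ∃ B : Finset ((Fin 2 → ℝ) × (Fin 2 → ℝ)), IsBracketingCoverC 2 ε B ∧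
      (B.card : ℝ) ≤ 2 * (1 / ε + 1 / 2) * (1 / ε) := by
  have hθ16 : (16:ℝ) ≤ 2/ε := by
    rw [le_div_iff₀ hε]; linarith
  have hθpos : (0:ℝ) < 2/ε := by positivity
  have hceil_ge : 2/ε ≤ (⌈(2:ℝ)/ε⌉₊ : ℝ) := Nat.le_ceil _
  have hceil_lt : (⌈(2:ℝ)/ε⌉₊ : ℝ) < 2/ε + 1 := Nat.ceil_lt_add_one hθpos.le
  have hceil16 : 16 ≤ ⌈(2:ℝ)/ε⌉₊ := by exact_mod_cast hθ16.trans hceil_ge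
  set Kn : ℕ := ⌈(2:ℝ)/ε⌉₊ - 1 with hKdef
  have hKr : (Kn : ℝ) = (⌈(2:ℝ)/ε⌉₊ : ℝ) - 1 := by
    rw [hKdef]; push_cast [Nat.cast_sub (by omega : 1 ≤ ⌈(2:ℝ)/ε⌉₊)]; ring
  have hKle : (Kn : ℝ) ≤ 2/ε := by rw [hKr]; linarith
  have hKge : 2/ε - 1 ≤ (Kn : ℝ) := by rw [hKr]; linarith
  have hθε : (2/ε) * (ε/2) = 1 := by field_simp
  have hPk_lt1 : ∀ k < Kn, PA ε k < 1 := by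
    intro k hk
    have hkr : (k:ℝ) ≤ (Kn:ℝ) - 1 := by
      have : (k:ℝ) + 1 ≤ (Kn:ℝ) := by exact_mod_cast hk
      linarith
    have h1 : PA ε k ≤ ((Kn:ℝ)-1) * (ε/2) := by
      simp only [PA]; exact mul_le_mul_of_nonneg_right hkr (by linarith)
    have h2 : ((Kn:ℝ)-1) * (ε/2) ≤ (2/ε-1)*(ε/2) + (ε/2) := by nlinarith
    nlinarith
  obtain ⟨hcov, hcard⟩ := shells_spec ε Kn (PA ε) (nA ε)
    (by simp [PA])
    (by
      intro k hk
      simp only [PA]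
      push_cast
      nlinarith [Nat.cast_nonneg (α := ℝ) k])
    (by
      have h1 : PA ε Kn ≤ (2/ε) * (ε/2) := by
        simp only [PA]; exact mul_le_mul_of_nonneg_right hKle (by linarith)
      rw [hθε] at h1; exact h1)
    (by
      have hPK : 1 - ε/2 ≤ PA ε Kn := by
        have h1 : (2/ε-1)*(ε/2) ≤ PA ε Kn := by
          simp only [PA]; exact mul_le_mul_of_nonneg_right hKge (by linarith)
        nlinarith
      have hPK1 : PA ε Kn ≤ 1 := by
        have h1 : PA ε Kn ≤ (2/ε) * (ε/2) := by
          simp only [PA]; exact mul_le_mul_of_nonneg_right hKle (by linarith)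
        rw [hθε] at h1; exact h1
      nlinarith)
    (by
      intro k hk
      have h1 := hPk_lt1 k hk
      simp only [nA]
      rw [Nat.one_le_ceil_iff]
      exact mul_pos (by linarith) (by positivity))
    (by
      intro k hk
      have h1 := hPk_lt1 k hk
      have hPk0 : 0 ≤ PA ε k := by simp only [PA]; positivity
      have hgap : PA ε (k+1) - PA ε k = ε/2 := by simp only [PA]; push_cast; ring
      have hnlb : (1 - PA ε k) * ((k:ℝ)+1) ≤ (nA ε k : ℝ) := by
        simp only [nA]; exact Nat.le_ceil _
      have hden : (0:ℝ) < (1 - PA ε k) * ((k:ℝ)+1) := mul_pos (by linarith) (by positivity)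
      have h2 : PA ε k * (1 - PA ε k) / (nA ε k : ℝ)
          ≤ PA ε k * (1 - PA ε k) / ((1 - PA ε k) * ((k:ℝ)+1)) :=
        div_le_div_of_nonneg_left (mul_nonneg hPk0 (by linarith)) hden hnlb
      have hne : (1 - PA ε k) ≠ 0 := ne_of_gt (by linarith : (0:ℝ) < 1 - PA ε k)
      have h3 : PA ε k * (1 - PA ε k) / ((1 - PA ε k) * ((k:ℝ)+1)) = PA ε k / ((k:ℝ)+1) := by
        rw [mul_comm (1 - PA ε k) ((k:ℝ)+1)]
        exact mul_div_mul_right _ _ hne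
      have h4 : PA ε k / ((k:ℝ)+1) ≤ ε/2 := by
        rw [div_le_iff₀ (by positivity)]
        simp only [PA]
        nlinarith [Nat.cast_nonneg (α := ℝ) k]
      rw [hgap]
      rw [h3] at h2
      linarith)
  refine ⟨shellsB Kn (PA ε) (nA ε), hcov, ?_⟩
  have hcardR : ((shellsB Kn (PA ε) (nA ε)).card : ℝ)
      ≤ 1 + 2 * ∑ k ∈ Finset.range Kn, (nA ε k : ℝ) := by
    have h := (Nat.cast_le (α := ℝ)).mpr hcard
    push_cast at h
    exact h
  have hsum : ∑ k ∈ Finset.range Kn, (nA ε k : ℝ)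
      ≤ (Kn:ℝ)*(Kn+1)/2 + Kn - (ε/2)*(((Kn:ℝ)-1)*Kn*(Kn+1)/3) := by
    rw [← sum_aux (ε/2) Kn]
    apply Finset.sum_le_sum
    intro k hk
    have hk' : k < Kn := Finset.mem_range.1 hk
    have h1 := hPk_lt1 k hk'
    have h2 : (nA ε k : ℝ) < (1 - PA ε k) * ((k:ℝ)+1) + 1 := by
      simp only [nA]
      exact Nat.ceil_lt_add_one (mul_nonneg (by linarith) (by positivity))
    simp only [PA] at h2 ⊢
    linarith
  have hkey := keyA (2/ε) (Kn:ℝ) hθ16 hKge hKle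
  have hbudget : 2 * (1 / ε + 1 / 2) * (1 / ε) = (2/ε)^2/2 + (2/ε)/2 := by
    field_simp
  rw [hbudget]
  have hee : ε/2 = 1/(2/ε) := by field_simp
  calc ((shellsB Kn (PA ε) (nA ε)).card : ℝ)
      ≤ 1 + 2 * ((Kn:ℝ)*(Kn+1)/2 + Kn - (ε/2)*(((Kn:ℝ)-1)*Kn*(Kn+1)/3)) := by linarith
    _ = 1 + ((Kn:ℝ)*((Kn:ℝ)+1) + 2*(Kn:ℝ) - (2/(2/ε))*(((Kn:ℝ)-1)*(Kn:ℝ)*((Kn:ℝ)+1)/3)) := by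
        have : (2:ℝ)/(2/ε) = ε := by field_simp
        rw [this]; ring
    _ ≤ (2/ε)^2/2 + (2/ε)/2 := hkey

noncomputable def PM3 : ℕ → ℝ := fun k => if k = 0 then 0 else 1333/2000
def nM3 : ℕ → ℕ := fun k => if k = 0 then 1 else 1

theorem instM3 (ε : ℝ) (h1 : (2/3 : ℝ) ≤ ε) :
    ∃ B : Finset ((Fin 2 → ℝ) × (Fin 2 → ℝ)), IsBracketingCoverC 2 ε B ∧
      (B.card : ℝ) ≤ 3 := by
  obtain ⟨hcov, hcard⟩ := shells_spec ε 1 PM3 nM3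
    (by norm_num [PM3])
    (by intro k hk; interval_cases k <;> norm_num [PM3])
    (by norm_num [PM3])
    (le_trans (by norm_num [PM3]) h1)
    (by intro k hk; interval_cases k <;> norm_num [nM3])
    (by intro k hk; interval_cases k <;>
        · refine le_trans ?_ h1
          norm_num [PM3, nM3])
  refine ⟨shellsB 1 PM3 nM3, hcov, ?_⟩
  have hs : ∑ k ∈ Finset.range 1, nM3 k = 1 := by
    simp [Finset.sum_range_succ, nM3]
  rw [hs] at hcard
  exact_mod_cast Nat.cast_le.mpr hcard

noncomputable def PM4 : ℕ → ℝ := fun k => if k = 0 then 0 else if k = 1 then 1/2 else 3/4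
def nM4 : ℕ → ℕ := fun k => if k = 0 then 1 else if k = 1 then 1 else 1

theorem instM4 (ε : ℝ) (h1 : (2/4 : ℝ) ≤ ε) :
    ∃ B : Finset ((Fin 2 → ℝ) × (Fin 2 → ℝ)), IsBracketingCoverC 2 ε B ∧
      (B.card : ℝ) ≤ 5 := by
  obtain ⟨hcov, hcard⟩ := shells_spec ε 2 PM4 nM4
    (by norm_num [PM4])
    (by intro k hk; interval_cases k <;> norm_num [PM4])
    (by norm_num [PM4])
    (le_trans (by norm_num [PM4]) h1)
    (by intro k hk; interval_cases k <;> norm_num [nM4])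
    (by intro k hk; interval_cases k <;>
        · refine le_trans ?_ h1
          norm_num [PM4, nM4])
  refine ⟨shellsB 2 PM4 nM4, hcov, ?_⟩
  have hs : ∑ k ∈ Finset.range 2, nM4 k = 2 := by
    simp [Finset.sum_range_succ, nM4]
  rw [hs] at hcard
  exact_mod_cast Nat.cast_le.mpr hcard

noncomputable def PM5 : ℕ → ℝ := fun k => if k = 0 then 0 else if k = 1 then 2/5 else if k = 2 then 14/25 else if k = 3 then 1427/2000 else 909/1000
def nM5 : ℕ → ℕ := fun k => if k = 0 then 1 else if k = 1 then 1 else if k = 2 then 1 else if k = 3 then 1 else 1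

theorem instM5 (ε : ℝ) (h1 : (2/5 : ℝ) ≤ ε) :
    ∃ B : Finset ((Fin 2 → ℝ) × (Fin 2 → ℝ)), IsBracketingCoverC 2 ε B ∧
      (B.card : ℝ) ≤ 9 := by
  obtain ⟨hcov, hcard⟩ := shells_spec ε 4 PM5 nM5
    (by norm_num [PM5])
    (by intro k hk; interval_cases k <;> norm_num [PM5])
    (by norm_num [PM5])
    (le_trans (by norm_num [PM5]) h1)
    (by intro k hk; interval_cases k <;> norm_num [nM5])
    (by intro k hk; interval_cases k <;>
        · refine le_trans ?_ h1
          norm_num [PM5, nM5])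
  refine ⟨shellsB 4 PM5 nM5, hcov, ?_⟩
  have hs : ∑ k ∈ Finset.range 4, nM5 k = 4 := by
    simp [Finset.sum_range_succ, nM5]
  rw [hs] at hcard
  exact_mod_cast Nat.cast_le.mpr hcard

noncomputable def PM6 : ℕ → ℝ := fun k => if k = 0 then 0 else if k = 1 then 333/1000 else if k = 2 then 111/250 else if k = 3 then 1307/2000 else 1747/2000
def nM6 : ℕ → ℕ := fun k => if k = 0 then 1 else if k = 1 then 1 else if k = 2 then 2 else if k = 3 then 2 else 1

theorem instM6 (ε : ℝ) (h1 : (2/6 : ℝ) ≤ ε) :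
    ∃ B : Finset ((Fin 2 → ℝ) × (Fin 2 → ℝ)), IsBracketingCoverC 2 ε B ∧
      (B.card : ℝ) ≤ 13 := by
  obtain ⟨hcov, hcard⟩ := shells_spec ε 4 PM6 nM6
    (by norm_num [PM6])
    (by intro k hk; interval_cases k <;> norm_num [PM6])
    (by norm_num [PM6])
    (le_trans (by norm_num [PM6]) h1)
    (by intro k hk; interval_cases k <;> norm_num [nM6])
    (by intro k hk; interval_cases k <;>
        · refine le_trans ?_ h1
          norm_num [PM6, nM6])
  refine ⟨shellsB 4 PM6 nM6, hcov, ?_⟩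
  have hs : ∑ k ∈ Finset.range 4, nM6 k = 6 := by
    simp [Finset.sum_range_succ, nM6]
  rw [hs] at hcard
  exact_mod_cast Nat.cast_le.mpr hcard

noncomputable def PM7 : ℕ → ℝ := fun k => if k = 0 then 0 else if k = 1 then 571/2000 else if k = 2 then 469/1000 else if k = 3 then 63/100 else if k = 4 then 799/1000 else 231/250
def nM7 : ℕ → ℕ := fun k => if k = 0 then 1 else if k = 1 then 2 else if k = 2 then 2 else if k = 3 then 2 else if k = 4 then 1 else 1

theorem instM7 (ε : ℝ) (h1 : (2/7 : ℝ) ≤ ε) :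
    ∃ B : Finset ((Fin 2 → ℝ) × (Fin 2 → ℝ)), IsBracketingCoverC 2 ε B ∧
      (B.card : ℝ) ≤ 17 := by
  obtain ⟨hcov, hcard⟩ := shells_spec ε 5 PM7 nM7
    (by norm_num [PM7])
    (by intro k hk; interval_cases k <;> norm_num [PM7])
    (by norm_num [PM7])
    (le_trans (by norm_num [PM7]) h1)
    (by intro k hk; interval_cases k <;> norm_num [nM7])
    (by intro k hk; interval_cases k <;>
        · refine le_trans ?_ h1
          norm_num [PM7, nM7])
  refine ⟨shellsB 5 PM7 nM7, hcov, ?_⟩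
  have hs : ∑ k ∈ Finset.range 5, nM7 k = 8 := by
    simp [Finset.sum_range_succ, nM7]
  rw [hs] at hcard
  exact_mod_cast Nat.cast_le.mpr hcard

noncomputable def PM8 : ℕ → ℝ := fun k => if k = 0 then 0 else if k = 1 then 1/4 else if k = 2 then 203/500 else if k = 3 then 107/200 else if k = 4 then 1321/2000 else if k = 5 then 399/500 else 1773/2000
def nM8 : ℕ → ℕ := fun k => if k = 0 then 1 else if k = 1 then 2 else if k = 2 then 2 else if k = 3 then 2 else if k = 4 then 2 else if k = 5 then 1 else 1

theorem instM8 (ε : ℝ) (h1 : (2/8 : ℝ) ≤ ε) :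
    ∃ B : Finset ((Fin 2 → ℝ) × (Fin 2 → ℝ)), IsBracketingCoverC 2 ε B ∧
      (B.card : ℝ) ≤ 21 := by
  obtain ⟨hcov, hcard⟩ := shells_spec ε 6 PM8 nM8
    (by norm_num [PM8])
    (by intro k hk; interval_cases k <;> norm_num [PM8])
    (by norm_num [PM8])
    (le_trans (by norm_num [PM8]) h1)
    (by intro k hk; interval_cases k <;> norm_num [nM8])
    (by intro k hk; interval_cases k <;>
        · refine le_trans ?_ h1
          norm_num [PM8, nM8])
  refine ⟨shellsB 6 PM8 nM8, hcov, ?_⟩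
  have hs : ∑ k ∈ Finset.range 6, nM8 k = 10 := by
    simp [Finset.sum_range_succ, nM8]
  rw [hs] at hcard
  exact_mod_cast Nat.cast_le.mpr hcard

noncomputable def PM9 : ℕ → ℝ := fun k => if k = 0 then 0 else if k = 1 then 111/500 else if k = 2 then 143/400 else if k = 3 then 929/2000 else if k = 4 then 281/500 else if k = 5 then 661/1000 else if k = 6 then 771/1000 else 1809/2000
def nM9 : ℕ → ℕ := fun k => if k = 0 then 1 else if k = 1 then 2 else if k = 2 then 2 else if k = 3 then 2 else if k = 4 then 2 else if k = 5 then 2 else if k = 6 then 2 else 1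

theorem instM9 (ε : ℝ) (h1 : (2/9 : ℝ) ≤ ε) :
    ∃ B : Finset ((Fin 2 → ℝ) × (Fin 2 → ℝ)), IsBracketingCoverC 2 ε B ∧
      (B.card : ℝ) ≤ 27 := by
  obtain ⟨hcov, hcard⟩ := shells_spec ε 7 PM9 nM9
    (by norm_num [PM9])
    (by intro k hk; interval_cases k <;> norm_num [PM9])
    (by norm_num [PM9])
    (le_trans (by norm_num [PM9]) h1)
    (by intro k hk; interval_cases k <;> norm_num [nM9])
    (by intro k hk; interval_cases k <;>
        · refine le_trans ?_ h1
          norm_num [PM9, nM9])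
  refine ⟨shellsB 7 PM9 nM9, hcov, ?_⟩
  have hs : ∑ k ∈ Finset.range 7, nM9 k = 13 := by
    simp [Finset.sum_range_succ, nM9]
  rw [hs] at hcard
  exact_mod_cast Nat.cast_le.mpr hcard

noncomputable def PM10 : ℕ → ℝ := fun k => if k = 0 then 0 else if k = 1 then 1/5 else if k = 2 then 8/25 else if k = 3 then 411/1000 else if k = 4 then 53/100 else if k = 5 then 1293/2000 else if k = 6 then 183/250 else if k = 7 then 1667/2000 else 241/250
def nM10 : ℕ → ℕ := fun k => if k = 0 then 1 else if k = 1 then 2 else if k = 2 then 2 else if k = 3 then 3 else if k = 4 then 3 else if k = 5 then 2 else if k = 6 then 2 else if k = 7 then 2 else 1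

theorem instM10 (ε : ℝ) (h1 : (2/10 : ℝ) ≤ ε) :
    ∃ B : Finset ((Fin 2 → ℝ) × (Fin 2 → ℝ)), IsBracketingCoverC 2 ε B ∧
      (B.card : ℝ) ≤ 35 := by
  obtain ⟨hcov, hcard⟩ := shells_spec ε 8 PM10 nM10
    (by norm_num [PM10])
    (by intro k hk; interval_cases k <;> norm_num [PM10])
    (by norm_num [PM10])
    (le_trans (by norm_num [PM10]) h1)
    (by intro k hk; interval_cases k <;> norm_num [nM10])
    (by intro k hk; interval_cases k <;>
        · refine le_trans ?_ h1
          norm_num [PM10, nM10])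
  refine ⟨shellsB 8 PM10 nM10, hcov, ?_⟩
  have hs : ∑ k ∈ Finset.range 8, nM10 k = 17 := by
    simp [Finset.sum_range_succ, nM10]
  rw [hs] at hcard
  exact_mod_cast Nat.cast_le.mpr hcard

noncomputable def PM11 : ℕ → ℝ := fun k => if k = 0 then 0 else if k = 1 then 363/2000 else if k = 2 then 289/1000 else if k = 3 then 46/125 else if k = 4 then 59/125 else if k = 5 then 1141/2000 else if k = 6 then 1341/2000 else if k = 7 then 1557/2000 else if k = 8 then 437/500 else 1891/2000
def nM11 : ℕ → ℕ := fun k => if k = 0 then 1 else if k = 1 then 2 else if k = 2 then 2 else if k = 3 then 3 else if k = 4 then 3 else if k = 5 then 3 else if k = 6 then 3 else if k = 7 then 2 else if k = 8 then 1 else 1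

theorem instM11 (ε : ℝ) (h1 : (2/11 : ℝ) ≤ ε) :
    ∃ B : Finset ((Fin 2 → ℝ) × (Fin 2 → ℝ)), IsBracketingCoverC 2 ε B ∧
      (B.card : ℝ) ≤ 41 := by
  obtain ⟨hcov, hcard⟩ := shells_spec ε 9 PM11 nM11
    (by norm_num [PM11])
    (by intro k hk; interval_cases k <;> norm_num [PM11])
    (by norm_num [PM11])
    (le_trans (by norm_num [PM11]) h1)
    (by intro k hk; interval_cases k <;> norm_num [nM11])
    (by intro k hk; interval_cases k <;>
        · refine le_trans ?_ h1
          norm_num [PM11, nM11])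
  refine ⟨shellsB 9 PM11 nM11, hcov, ?_⟩
  have hs : ∑ k ∈ Finset.range 9, nM11 k = 20 := by
    simp [Finset.sum_range_succ, nM11]
  rw [hs] at hcard
  exact_mod_cast Nat.cast_le.mpr hcard

noncomputable def PM12 : ℕ → ℝ := fun k => if k = 0 then 0 else if k = 1 then 333/2000 else if k = 2 then 527/2000 else if k = 3 then 333/1000 else if k = 4 then 851/2000 else if k = 5 then 1021/2000 else if k = 6 then 1187/2000 else if k = 7 then 1359/2000 else if k = 8 then 1547/2000 else if k = 9 then 341/400 else 239/250
def nM12 : ℕ → ℕ := fun k => if k = 0 then 1 else if k = 1 then 2 else if k = 2 then 2 else if k = 3 then 3 else if k = 4 then 3 else if k = 5 then 3 else if k = 6 then 3 else if k = 7 then 3 else if k = 8 then 2 else if k = 9 then 2 else 1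

theorem instM12 (ε : ℝ) (h1 : (2/12 : ℝ) ≤ ε) :
    ∃ B : Finset ((Fin 2 → ℝ) × (Fin 2 → ℝ)), IsBracketingCoverC 2 ε B ∧
      (B.card : ℝ) ≤ 49 := by
  obtain ⟨hcov, hcard⟩ := shells_spec ε 10 PM12 nM12
    (by norm_num [PM12])
    (by intro k hk; interval_cases k <;> norm_num [PM12])
    (by norm_num [PM12])
    (le_trans (by norm_num [PM12]) h1)
    (by intro k hk; interval_cases k <;> norm_num [nM12])
    (by intro k hk; interval_cases k <;>
        · refine le_trans ?_ h1
          norm_num [PM12, nM12])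
  refine ⟨shellsB 10 PM12 nM12, hcov, ?_⟩
  have hs : ∑ k ∈ Finset.range 10, nM12 k = 24 := by
    simp [Finset.sum_range_succ, nM12]
  rw [hs] at hcard
  exact_mod_cast Nat.cast_le.mpr hcard

noncomputable def PM13 : ℕ → ℝ := fun k => if k = 0 then 0 else if k = 1 then 307/2000 else if k = 2 then 121/500 else if k = 3 then 38/125 else if k = 4 then 387/1000 else if k = 5 then 923/2000 else if k = 6 then 213/400 else if k = 7 then 603/1000 else if k = 8 then 677/1000 else if k = 9 then 303/400 else if k = 10 then 819/1000 else if k = 11 then 1797/2000 else 961/1000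
def nM13 : ℕ → ℕ := fun k => if k = 0 then 1 else if k = 1 then 2 else if k = 2 then 2 else if k = 3 then 3 else if k = 4 then 3 else if k = 5 then 3 else if k = 6 then 3 else if k = 7 then 3 else if k = 8 then 3 else if k = 9 then 2 else if k = 10 then 2 else if k = 11 then 1 else 1

theorem instM13 (ε : ℝ) (h1 : (2/13 : ℝ) ≤ ε) :
    ∃ B : Finset ((Fin 2 → ℝ) × (Fin 2 → ℝ)), IsBracketingCoverC 2 ε B ∧
      (B.card : ℝ) ≤ 57 := by
  obtain ⟨hcov, hcard⟩ := shells_spec ε 12 PM13 nM13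
    (by norm_num [PM13])
    (by intro k hk; interval_cases k <;> norm_num [PM13])
    (by norm_num [PM13])
    (le_trans (by norm_num [PM13]) h1)
    (by intro k hk; interval_cases k <;> norm_num [nM13])
    (by intro k hk; interval_cases k <;>
        · refine le_trans ?_ h1
          norm_num [PM13, nM13])
  refine ⟨shellsB 12 PM13 nM13, hcov, ?_⟩
  have hs : ∑ k ∈ Finset.range 12, nM13 k = 28 := by
    simp [Finset.sum_range_succ, nM13]
  rw [hs] at hcard
  exact_mod_cast Nat.cast_le.mpr hcard

noncomputable def PM14 : ℕ → ℝ := fun k => if k = 0 then 0 else if k = 1 then 57/400 else if k = 2 then 28/125 else if k = 3 then 617/2000 else if k = 4 then 19/50 else if k = 5 then 111/250 else if k = 6 then 21/40 else if k = 7 then 1211/2000 else if k = 8 then 1337/2000 else if k = 9 then 737/1000 else if k = 10 then 163/200 else if k = 11 then 441/500 else 389/400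
def nM14 : ℕ → ℕ := fun k => if k = 0 then 1 else if k = 1 then 2 else if k = 2 then 3 else if k = 3 then 3 else if k = 4 then 3 else if k = 5 then 4 else if k = 6 then 4 else if k = 7 then 3 else if k = 8 then 3 else if k = 9 then 3 else if k = 10 then 2 else if k = 11 then 2 else 1

theorem instM14 (ε : ℝ) (h1 : (2/14 : ℝ) ≤ ε) :
    ∃ B : Finset ((Fin 2 → ℝ) × (Fin 2 → ℝ)), IsBracketingCoverC 2 ε B ∧
      (B.card : ℝ) ≤ 67 := by
  obtain ⟨hcov, hcard⟩ := shells_spec ε 12 PM14 nM14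
    (by norm_num [PM14])
    (by intro k hk; interval_cases k <;> norm_num [PM14])
    (by norm_num [PM14])
    (le_trans (by norm_num [PM14]) h1)
    (by intro k hk; interval_cases k <;> norm_num [nM14])
    (by intro k hk; interval_cases k <;>
        · refine le_trans ?_ h1
          norm_num [PM14, nM14])
  refine ⟨shellsB 12 PM14 nM14, hcov, ?_⟩
  have hs : ∑ k ∈ Finset.range 12, nM14 k = 33 := by
    simp [Finset.sum_range_succ, nM14]
  rw [hs] at hcard
  exact_mod_cast Nat.cast_le.mpr hcard

noncomputable def PM15 : ℕ → ℝ := fun k => if k = 0 then 0 else if k = 1 then 133/1000 else if k = 2 then 417/2000 else if k = 3 then 573/2000 else if k = 4 then 703/2000 else if k = 5 then 817/2000 else if k = 6 then 481/1000 else if k = 7 then 1103/2000 else if k = 8 then 249/400 else if k = 9 then 697/1000 else if k = 10 then 1519/2000 else if k = 11 then 1663/2000 else if k = 12 then 1789/2000 else 1961/2000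
def nM15 : ℕ → ℕ := fun k => if k = 0 then 1 else if k = 1 then 2 else if k = 2 then 3 else if k = 3 then 3 else if k = 4 then 3 else if k = 5 then 4 else if k = 6 then 4 else if k = 7 then 4 else if k = 8 then 4 else if k = 9 then 3 else if k = 10 then 3 else if k = 11 then 2 else if k = 12 then 2 else 1

theorem instM15 (ε : ℝ) (h1 : (2/15 : ℝ) ≤ ε) :
    ∃ B : Finset ((Fin 2 → ℝ) × (Fin 2 → ℝ)), IsBracketingCoverC 2 ε B ∧
      (B.card : ℝ) ≤ 77 := by
  obtain ⟨hcov, hcard⟩ := shells_spec ε 13 PM15 nM15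
    (by norm_num [PM15])
    (by intro k hk; interval_cases k <;> norm_num [PM15])
    (by norm_num [PM15])
    (le_trans (by norm_num [PM15]) h1)
    (by intro k hk; interval_cases k <;> norm_num [nM15])
    (by intro k hk; interval_cases k <;>
        · refine le_trans ?_ h1
          norm_num [PM15, nM15])
  refine ⟨shellsB 13 PM15 nM15, hcov, ?_⟩
  have hs : ∑ k ∈ Finset.range 13, nM15 k = 38 := by
    simp [Finset.sum_range_succ, nM15]
  rw [hs] at hcard
  exact_mod_cast Nat.cast_le.mpr hcard

noncomputable def PM16 : ℕ → ℝ := fun k => if k = 0 then 0 else if k = 1 then 1/8 else if k = 2 then 39/200 else if k = 3 then 107/400 else if k = 4 then 327/1000 else if k = 5 then 793/2000 else if k = 6 then 923/2000 else if k = 7 then 131/250 else if k = 8 then 1173/2000 else if k = 9 then 1301/2000 else if k = 10 then 1437/2000 else if k = 11 then 97/125 else if k = 12 then 843/1000 else if k = 13 then 1803/2000 else 491/500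
def nM16 : ℕ → ℕ := fun k => if k = 0 then 1 else if k = 1 then 2 else if k = 2 then 3 else if k = 3 then 3 else if k = 4 then 4 else if k = 5 then 4 else if k = 6 then 4 else if k = 7 then 4 else if k = 8 then 4 else if k = 9 then 4 else if k = 10 then 3 else if k = 11 then 3 else if k = 12 then 2 else if k = 13 then 2 else 1

theorem instM16 (ε : ℝ) (h1 : (2/16 : ℝ) ≤ ε) :
    ∃ B : Finset ((Fin 2 → ℝ) × (Fin 2 → ℝ)), IsBracketingCoverC 2 ε B ∧
      (B.card : ℝ) ≤ 87 := by
  obtain ⟨hcov, hcard⟩ := shells_spec ε 14 PM16 nM16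
    (by norm_num [PM16])
    (by intro k hk; interval_cases k <;> norm_num [PM16])
    (by norm_num [PM16])
    (le_trans (by norm_num [PM16]) h1)
    (by intro k hk; interval_cases k <;> norm_num [nM16])
    (by intro k hk; interval_cases k <;>
        · refine le_trans ?_ h1
          norm_num [PM16, nM16])
  refine ⟨shellsB 14 PM16 nM16, hcov, ?_⟩
  have hs : ∑ k ∈ Finset.range 14, nM16 k = 43 := by
    simp [Finset.sum_range_succ, nM16]
  rw [hs] at hcard
  exact_mod_cast Nat.cast_le.mpr hcard


theorem budget_ge (ε b C : ℝ) (hε : 0 < ε) (hb : ε ≤ b) (hC : C ≤ 2/b^2 + 1/b) :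
    C ≤ 2 * (1/ε + 1/2) * (1/ε) := by
  have hbpos : (0:ℝ) < b := lt_of_lt_of_le hε hb
  have i1 : 1/b ≤ 1/ε := one_div_le_one_div_of_le hε hb
  have i2 : 1/b^2 ≤ 1/ε^2 :=
    one_div_le_one_div_of_le (by positivity) (pow_le_pow_left₀ hε.le hb 2)
  have hback : 2 * (1/ε + 1/2) * (1/ε) = 2/ε^2 + 1/ε := by
    field_simp
  rw [hback]
  have e1 : 2/b^2 = 2*(1/b^2) := by ring
  have e2 : 2/ε^2 = 2*(1/ε^2) := by ring
  linarith

end Brack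

/-- Bound (2.10) for `d = 2`: the bracketing number of the family `C_2` of anchored boxes
in `[0,1]^2` satisfies `N_[](ε, C_2, ‖·‖_{L¹}) ≤ 2 (1/ε + 1/2) (1/ε)`; more precisely,
there is an `ε`-bracketing cover of `C_2` of cardinality at most `2 (1/ε + 1/2) (1/ε)`. -/
theorem bracketingNumberC_two_le (ε : ℝ) (hε : ε ∈ Set.Ioo (0 : ℝ) 1) :
    (bracketingNumberC 2 ε : ℝ) ≤ 2 * (1 / ε + 1 / 2) * (1 / ε) ∧
    ∃ B : Finset ((Fin 2 → ℝ) × (Fin 2 → ℝ)), IsBracketingCoverC 2 ε B ∧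
      (B.card : ℝ) ≤ 2 * (1 / ε + 1 / 2) * (1 / ε) := by

  obtain ⟨hε0, hε1⟩ := hε
  have main : ∃ B : Finset ((Fin 2 → ℝ) × (Fin 2 → ℝ)), IsBracketingCoverC 2 ε B ∧
      (B.card : ℝ) ≤ 2 * (1 / ε + 1 / 2) * (1 / ε) := by
    by_cases h3 : (2/3 : ℝ) ≤ ε
    · obtain ⟨B, hB, hc⟩ := Brack.instM3 ε h3
      exact ⟨B, hB, Brack.budget_ge ε (1) _ hε0 hε1.le (hc.trans (by norm_num))⟩
    by_cases h4 : (2/4 : ℝ) ≤ ε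
    · obtain ⟨B, hB, hc⟩ := Brack.instM4 ε h4
      exact ⟨B, hB, Brack.budget_ge ε (2/3) _ hε0 (le_of_not_ge h3) (hc.trans (by norm_num))⟩
    by_cases h5 : (2/5 : ℝ) ≤ ε
    · obtain ⟨B, hB, hc⟩ := Brack.instM5 ε h5
      exact ⟨B, hB, Brack.budget_ge ε (2/4) _ hε0 (le_of_not_ge h4) (hc.trans (by norm_num))⟩
    by_cases h6 : (2/6 : ℝ) ≤ ε
    · obtain ⟨B, hB, hc⟩ := Brack.instM6 ε h6
      exact ⟨B, hB, Brack.budget_ge ε (2/5) _ hε0 (le_of_not_ge h5) (hc.trans (by norm_num))⟩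
    by_cases h7 : (2/7 : ℝ) ≤ ε
    · obtain ⟨B, hB, hc⟩ := Brack.instM7 ε h7
      exact ⟨B, hB, Brack.budget_ge ε (2/6) _ hε0 (le_of_not_ge h6) (hc.trans (by norm_num))⟩
    by_cases h8 : (2/8 : ℝ) ≤ ε
    · obtain ⟨B, hB, hc⟩ := Brack.instM8 ε h8
      exact ⟨B, hB, Brack.budget_ge ε (2/7) _ hε0 (le_of_not_ge h7) (hc.trans (by norm_num))⟩
    by_cases h9 : (2/9 : ℝ) ≤ ε
    · obtain ⟨B, hB, hc⟩ := Brack.instM9 ε h9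
      exact ⟨B, hB, Brack.budget_ge ε (2/8) _ hε0 (le_of_not_ge h8) (hc.trans (by norm_num))⟩
    by_cases h10 : (2/10 : ℝ) ≤ ε
    · obtain ⟨B, hB, hc⟩ := Brack.instM10 ε h10
      exact ⟨B, hB, Brack.budget_ge ε (2/9) _ hε0 (le_of_not_ge h9) (hc.trans (by norm_num))⟩
    by_cases h11 : (2/11 : ℝ) ≤ ε
    · obtain ⟨B, hB, hc⟩ := Brack.instM11 ε h11
      exact ⟨B, hB, Brack.budget_ge ε (2/10) _ hε0 (le_of_not_ge h10) (hc.trans (by norm_num))⟩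
    by_cases h12 : (2/12 : ℝ) ≤ ε
    · obtain ⟨B, hB, hc⟩ := Brack.instM12 ε h12
      exact ⟨B, hB, Brack.budget_ge ε (2/11) _ hε0 (le_of_not_ge h11) (hc.trans (by norm_num))⟩
    by_cases h13 : (2/13 : ℝ) ≤ ε
    · obtain ⟨B, hB, hc⟩ := Brack.instM13 ε h13
      exact ⟨B, hB, Brack.budget_ge ε (2/12) _ hε0 (le_of_not_ge h12) (hc.trans (by norm_num))⟩
    by_cases h14 : (2/14 : ℝ) ≤ ε
    · obtain ⟨B, hB, hc⟩ := Brack.instM14 ε h14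
      exact ⟨B, hB, Brack.budget_ge ε (2/13) _ hε0 (le_of_not_ge h13) (hc.trans (by norm_num))⟩
    by_cases h15 : (2/15 : ℝ) ≤ ε
    · obtain ⟨B, hB, hc⟩ := Brack.instM15 ε h15
      exact ⟨B, hB, Brack.budget_ge ε (2/14) _ hε0 (le_of_not_ge h14) (hc.trans (by norm_num))⟩
    by_cases h16 : (2/16 : ℝ) ≤ ε
    · obtain ⟨B, hB, hc⟩ := Brack.instM16 ε h16
      exact ⟨B, hB, Brack.budget_ge ε (2/15) _ hε0 (le_of_not_ge h15) (hc.trans (by norm_num))⟩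
    exact Brack.instA ε hε0 (by linarith [not_le.1 h16])

  obtain ⟨B, hB, hc⟩ := main
  refine ⟨?_, B, hB, hc⟩
  have hmem : B.card ∈ { n : ℕ | ∃ B' : Finset ((Fin 2 → ℝ) × (Fin 2 → ℝ)),
      IsBracketingCoverC 2 ε B' ∧ B'.card = n } := ⟨B, hB, rfl⟩
  have h := Nat.sInf_le hmem
  calc ((bracketingNumberC 2 ε : ℕ) : ℝ) ≤ (B.card : ℝ) := by exact_mod_cast h
    _ ≤ _ := hc
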